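/- For all integers m ≥ 0 and k ≥ 0, S(m, m−k) = ∑_{p=0}^{k} T(k+p, p) · C(m, k+p). -/

import Mathlib

open Finset

/-- Stirling number of the second kind `S(n,l)`. -/
def stirling2 : ℕ → ℕ → ℕ
  | 0, 0 => 1
  | 0, _ + 1 => 0
  | _ + 1, 0 => 0
  | n + 1, l + 1 => (l + 1) * stirling2 n (l + 1) + stirling2 n l

/-- Stirling number of the second kind with integer lower argument, extended by
`S(n,l) = 0` whenever `l < 0`. -/
def stirlingZ (n : ℕ) (l : ℤ) : ℕ := if 0 ≤ l then stirling2 n l.toNat else 0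

/-- Associated Stirling number of the second kind `T(n,l)`:
`T(n,l) = l·T(n−1,l) + (n−1)·T(n−2,l−1)`, `T(0,l) = [l=0]`, `T(1,l) = 0`, `T(n,0) = [n=0]`. -/
def astirling : ℕ → ℕ → ℕ
  | 0, 0 => 1
  | 0, _ + 1 => 0
  | 1, _ => 0
  | _ + 2, 0 => 0
  | n + 2, l + 1 => (l + 1) * astirling (n + 1) (l + 1) + (n + 1) * astirling n l

lemma stirling2_eq_zero : ∀ n l, n < l → stirling2 n l = 0
  | 0, _ + 1, _ => rfl
  | n + 1, l + 1, h => by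
      show (l + 1) * stirling2 n (l + 1) + stirling2 n l = 0
      rw [stirling2_eq_zero n (l + 1) (by omega), stirling2_eq_zero n l (by omega)]
      ring

lemma stirling2_self : ∀ n, stirling2 n n = 1
  | 0 => rfl
  | n + 1 => by
      show (n + 1) * stirling2 n (n + 1) + stirling2 n n = 1
      rw [stirling2_eq_zero n (n + 1) (by omega), stirling2_self n]
      ring

lemma astirling_eq_zero : ∀ n l, n < 2 * l → astirling n l = 0
  | 0, _ + 1, _ => rfl
  | 1, _ + 1, _ => rfl
  | n + 2, l + 1, h => by
      show (l + 1) * astirling (n + 1) (l + 1) + (n + 1) * astirling n l = 0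
      rw [astirling_eq_zero (n + 1) (l + 1) (by omega), astirling_eq_zero n l (by omega)]
      ring

lemma astirling_succ_zero (n : ℕ) : astirling (n + 1) 0 = 0 := by
  cases n <;> rfl

lemma astirling_rec (n l : ℕ) :
    astirling (n + 2) (l + 1) = (l + 1) * astirling (n + 1) (l + 1) + (n + 1) * astirling n l := rfl

lemma lemD (m j : ℕ) :
    ((j : ℤ) + 1) * Nat.choose m (j + 1) = ((m : ℤ) - j) * Nat.choose m j := by
  rcases le_or_gt j m with h | h
  · have := Nat.choose_succ_right_eq m j
    have h2 : ((m.choose (j + 1) * (j + 1) : ℕ) : ℤ) = ((m.choose j * (m - j) : ℕ) : ℤ) := by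
      rw [this]
    push_cast [Nat.cast_sub h] at h2
    linarith
  · rw [Nat.choose_eq_zero_of_lt h, Nat.choose_eq_zero_of_lt (by omega)]
    simp

lemma stirlingZ_rec (m k : ℕ) :
    stirlingZ (m + 1) ((m : ℤ) - k) =
      ((m : ℤ) - k).toNat * stirlingZ m ((m : ℤ) - k) + stirlingZ m ((m : ℤ) - (k + 1)) := by
  rcases lt_trichotomy k m with h | h | h
  · obtain ⟨l, rfl⟩ : ∃ l, m = k + l + 1 := ⟨m - k - 1, by omega⟩
    have h1 : ((k + l + 1 : ℕ) : ℤ) - k = ((l + 1 : ℕ) : ℤ) := by push_cast; ring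
    have h2 : ((k + l + 1 : ℕ) : ℤ) - ((k : ℤ) + 1) = ((l : ℕ) : ℤ) := by push_cast; ring
    rw [h1, h2]
    simp only [stirlingZ, if_pos (Int.ofNat_nonneg _), Int.toNat_natCast]
    show stirling2 (k + l + 1 + 1) (l + 1) = _
    have : stirling2 (k + l + 1 + 1) (l + 1)
        = (l + 1) * stirling2 (k + l + 1) (l + 1) + stirling2 (k + l + 1) l := rfl
    rw [this]
  · subst h
    have h1 : (k : ℤ) - k = 0 := by ring
    rw [h1]
    have h2 : stirlingZ (k + 1) 0 = stirling2 (k + 1) 0 := by simp [stirlingZ]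
    rw [h2]
    have h3 : stirlingZ k ((k : ℤ) - (k + 1)) = 0 := by
      rw [stirlingZ, if_neg (by omega)]
    rw [h3]
    show 0 = 0 * stirlingZ k 0 + 0
    ring
  · rw [stirlingZ, if_neg (by omega), stirlingZ, if_neg (by omega), stirlingZ,
      if_neg (by omega)]
    have : ((m : ℤ) - k).toNat = 0 := by omega
    rw [this]

lemma dagger (m k : ℕ) :
    (∑ p ∈ range (k + 2), ((astirling (k + 1 + p) p : ℤ) * Nat.choose m (k + p))) =
      ((m : ℤ) - k) * ∑ p ∈ range (k + 1), ((astirling (k + p) p : ℤ) * Nat.choose m (k + p)) := by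
  set g : ℕ → ℤ := fun q => (q : ℤ) * astirling (k + q) q * Nat.choose m (k + q) with hg
  rw [Finset.sum_range_succ']
  have h0 : (astirling (k + 1 + 0) 0 : ℤ) * Nat.choose m (k + 0) = 0 := by
    rw [astirling_succ_zero]; simp
  rw [h0, add_zero]
  have hterm : ∀ q ∈ range (k + 1),
      (astirling (k + 1 + (q + 1)) (q + 1) : ℤ) * Nat.choose m (k + (q + 1)) =
        g (q + 1) + (((m : ℤ) - k) - q) * ((astirling (k + q) q : ℤ) * Nat.choose m (k + q)) := by
    intro q _
    have e1 : k + 1 + (q + 1) = (k + q) + 2 := by omega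
    rw [e1, astirling_rec (k + q) q]
    have e2 : k + (q + 1) = (k + q) + 1 := by omega
    have hD := lemD m (k + q)
    simp only [hg, e2]
    push_cast at hD ⊢
    linear_combination (astirling (k + q) q : ℤ) * hD
  rw [Finset.sum_congr rfl hterm, Finset.sum_add_distrib]
  have hA : (∑ q ∈ range (k + 1), g (q + 1)) = ∑ q ∈ range (k + 1), g q := by
    have h1 := Finset.sum_range_succ' g (k + 1)
    have h2 := Finset.sum_range_succ g (k + 1)
    have hg0 : g 0 = 0 := by simp [hg]
    have hgk : g (k + 1) = 0 := by
      simp only [hg]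
      rw [astirling_eq_zero (k + (k + 1)) (k + 1) (by omega)]
      simp
    rw [hg0, add_zero] at h1
    rw [hgk, add_zero] at h2
    rw [← h1, h2]
  rw [hA]
  have hB : (∑ q ∈ range (k + 1),
        (((m : ℤ) - k) - q) * ((astirling (k + q) q : ℤ) * Nat.choose m (k + q))) =
      ((m : ℤ) - k) * (∑ p ∈ range (k + 1), ((astirling (k + p) p : ℤ) * Nat.choose m (k + p)))
        - ∑ q ∈ range (k + 1), g q := by
    rw [Finset.mul_sum, ← Finset.sum_sub_distrib]
    apply Finset.sum_congr rfl
    intro q _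
    simp only [hg]
    ring
  rw [hB]
  ring

lemma key (m k : ℕ) :
    (∑ p ∈ range (k + 2), ((astirling (k + 1 + p) p : ℤ) * Nat.choose (m + 1) (k + 1 + p))) =
      ((m : ℤ) - k) * (∑ p ∈ range (k + 1), ((astirling (k + p) p : ℤ) * Nat.choose m (k + p)))
        + ∑ p ∈ range (k + 2), ((astirling (k + 1 + p) p : ℤ) * Nat.choose m (k + 1 + p)) := by
  have hsplit : ∀ p ∈ range (k + 2),
      (astirling (k + 1 + p) p : ℤ) * Nat.choose (m + 1) (k + 1 + p) =
        (astirling (k + 1 + p) p : ℤ) * Nat.choose m (k + p)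
          + (astirling (k + 1 + p) p : ℤ) * Nat.choose m (k + 1 + p) := by
    intro p _
    have e : k + 1 + p = (k + p) + 1 := by omega
    rw [e, Nat.choose_succ_succ m (k + p)]
    push_cast
    ring
  rw [Finset.sum_congr rfl hsplit, Finset.sum_add_distrib, dagger m k]

/-- `S(m, m−k) = ∑_{p=0}^{k} T(k+p, p) · C(m, k+p)`. -/
theorem stirling_eq_sum_associated (m k : ℕ) :
    stirlingZ m ((m : ℤ) - k) =
      ∑ p ∈ Finset.range (k + 1), astirling (k + p) p * Nat.choose m (k + p) := by
  induction m generalizing k with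
  | zero =>
    cases k with
    | zero => simp [stirlingZ, stirling2, astirling]
    | succ k =>
      rw [stirlingZ, if_neg (by push_cast; omega)]
      symm
      apply Finset.sum_eq_zero
      intro p _
      rw [Nat.choose_eq_zero_of_lt (by omega)]
      ring
  | succ m ih =>
    cases k with
    | zero =>
      rw [stirlingZ, if_pos (by push_cast; omega)]
      have h1 : (((m + 1 : ℕ) : ℤ) - (0 : ℕ)).toNat = m + 1 := by push_cast; omega
      rw [h1, stirling2_self]
      simp [astirling]
    | succ k =>
      have h1 : ((m + 1 : ℕ) : ℤ) - ((k + 1 : ℕ) : ℤ) = (m : ℤ) - k := by push_cast; ring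
      rw [h1, stirlingZ_rec m k]
      have hk1 : ((m : ℤ) - ((k + 1 : ℕ) : ℤ)) = (m : ℤ) - ((k : ℤ) + 1) := by push_cast; ring
      have ihk := ih k
      have ihk1 := ih (k + 1)
      rw [hk1] at ihk1
      rw [ihk, ihk1]
      -- now a pure ℕ identity; move to ℤ and use `key`
      have hkey := key m k
      rcases le_or_gt k m with h | h
    -- case k ≤ m
      · have ht : ((m : ℤ) - k).toNat = m - k := by omega
        rw [ht]
        zify [h]
        linarith [hkey]
      · have ht : ((m : ℤ) - k).toNat = 0 := by omega
        rw [ht, zero_mul, zero_add]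
        apply Finset.sum_congr rfl
        intro p _
        rw [Nat.choose_eq_zero_of_lt (by omega), Nat.choose_eq_zero_of_lt (by omega)]
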